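/- Let P be a standard Banach space property. If P is compactly determined for Lipschitz-free spaces, then P is locally determined for Lipschitz-free spaces. Moreover, if M is a locally compact complete pointed metric space, then P is compactly determined for F(M) if and only if P is locally determined for F(M). -/

import Mathlib

open Filter Topology Metric Set

noncomputable section

/-- A formal series `∑ yₙ` in a normed space `Y` is weakly unconditionally Cauchy (WUC)
if `∑ |⟨φ, yₙ⟩| < ∞` for every continuous linear functional `φ` on `Y`. -/
def IsWUC {Y : Type*} [SeminormedAddCommGroup Y] [NormedSpace ℝ Y] (y : ℕ → Y) : Prop :=
  ∀ φ : Y →L[ℝ] ℝ, Summable fun n => |φ (y n)|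

/-- `Γ` is a (V*)-set in `X`: for every WUC series `∑ fₙ` in the dual `X*`,
`sup_{x ∈ Γ} |⟨x, fₙ⟩| → 0`. -/
def IsVStarSet {X : Type*} [SeminormedAddCommGroup X] [NormedSpace ℝ X] (Γ : Set X) : Prop :=
  ∀ f : ℕ → (X →L[ℝ] ℝ), IsWUC f →
    ∀ ε > (0 : ℝ), ∀ᶠ n in atTop, ∀ x ∈ Γ, |f n x| ≤ ε

/-- `Γ` is relatively weakly compact: its closure in the weak topology is compact. -/
def RelWeaklyCompact {X : Type*} [SeminormedAddCommGroup X] [NormedSpace ℝ X]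
    (Γ : Set X) : Prop :=
  IsCompact (closure ((toWeakSpace ℝ X) '' Γ))

/-- A normed space has Pełczyński's property (V*) if every (V*)-set is relatively
weakly compact. -/
def HasPropertyVStar (X : Type*) [SeminormedAddCommGroup X] [NormedSpace ℝ X] : Prop :=
  ∀ Γ : Set X, IsVStarSet Γ → RelWeaklyCompact Γ

/-- `F`, together with the map `δ : M → F`, is (a realization of) the Lipschitz-free space
over the pointed metric space `(M, o)`: `δ` is a base-point-preserving isometric embedding
whose range has dense linear span, and every Lipschitz function `f : M → ℝ` vanishing at
the base point lifts to a continuous linear functional of norm at most `Lip(f)` (this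
characterizes `F(M)`, with dual `Lip₀(M)`, up to isometric isomorphism). -/
structure IsLipschitzFree {M : Type*} [MetricSpace M] (o : M)
    {F : Type*} [NormedAddCommGroup F] [NormedSpace ℝ F] (δ : M → F) : Prop where
  isometry : Isometry δ
  map_base : δ o = 0
  dense_span : Dense (Submodule.span ℝ (Set.range δ) : Set F)
  lift : ∀ (L : NNReal) (f : M → ℝ), LipschitzWith L f → f o = 0 →
    ∃ φ : F →L[ℝ] ℝ, ‖φ‖ ≤ L ∧ ∀ x, φ (δ x) = f x

/-- The subspace of `F` corresponding to the Lipschitz-free space `F(S)` over a subset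
`S ⊆ M`: the closed linear span of `δ(S)`. -/
def freeSpan {M : Type*} [MetricSpace M] {F : Type*} [NormedAddCommGroup F]
    [NormedSpace ℝ F] (δ : M → F) (S : Set M) : Submodule ℝ F :=
  (Submodule.span ℝ (δ '' S)).topologicalClosure

theorem mem_freeSpan {M : Type*} [MetricSpace M] {F : Type*} [NormedAddCommGroup F]
    [NormedSpace ℝ F] (δ : M → F) {S : Set M} {x : M} (hx : x ∈ S) :
    δ x ∈ freeSpan δ S :=
  (Submodule.span ℝ (δ '' S)).le_topologicalClosure
    (Submodule.subset_span ⟨x, hx, rfl⟩)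

universe v

/-- A Banach space property is standard if it is stable under isomorphism, finite
direct sums, and passing to closed subspaces. -/
def StandardProperty
    (P : ∀ (X : Type v) [NormedAddCommGroup X] [NormedSpace ℝ X], Prop) : Prop :=
  (∀ (X Y : Type v) [NormedAddCommGroup X] [NormedSpace ℝ X]
      [NormedAddCommGroup Y] [NormedSpace ℝ Y], (X ≃L[ℝ] Y) → P X → P Y) ∧
  (∀ (X Y : Type v) [NormedAddCommGroup X] [NormedSpace ℝ X]
      [NormedAddCommGroup Y] [NormedSpace ℝ Y], P X → P Y → P (X × Y)) ∧
  (∀ (X : Type v) [NormedAddCommGroup X] [NormedSpace ℝ X] (S : Submodule ℝ X),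
      IsClosed (S : Set X) → P X → P ↥S)

/-- `P` is compactly determined for the Lipschitz-free space `F(M)` (realized as `F`
via `δ`): `F(M)` satisfies `P` whenever `F(K ∪ {0})` satisfies `P` for all compact
`K ⊆ M`. -/
def CompactlyDetermined
    (P : ∀ (X : Type v) [NormedAddCommGroup X] [NormedSpace ℝ X], Prop)
    {M : Type*} [MetricSpace M] (o : M)
    {F : Type v} [NormedAddCommGroup F] [NormedSpace ℝ F] (δ : M → F) : Prop :=
  (∀ K : Set M, IsCompact K → P ↥(freeSpan δ (K ∪ {o}))) → P F

/-- `P` is locally determined for the Lipschitz-free space `F(M)` (realized as `F` via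
`δ`): `F(M)` satisfies `P` whenever every point of `M` has a neighborhood `U` such that
`F(cl(U) ∪ {0})` satisfies `P`. -/
def LocallyDetermined
    (P : ∀ (X : Type v) [NormedAddCommGroup X] [NormedSpace ℝ X], Prop)
    {M : Type*} [MetricSpace M] (o : M)
    {F : Type v} [NormedAddCommGroup F] [NormedSpace ℝ F] (δ : M → F) : Prop :=
  (∀ x : M, ∃ U ∈ 𝓝 x, P ↥(freeSpan δ (closure U ∪ {o}))) → P F

section Aux

universe u

lemma standard_mono {P : ∀ (X : Type v) [NormedAddCommGroup X] [NormedSpace ℝ X], Prop}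
    (hP : StandardProperty P) {X : Type v} [NormedAddCommGroup X] [NormedSpace ℝ X]
    {W₁ W₂ : Submodule ℝ X} (hle : W₁ ≤ W₂) (hcl : IsClosed (W₁ : Set X))
    (h : P ↥W₂) : P ↥W₁ := by
  set S : Submodule ℝ ↥W₂ := W₁.comap W₂.subtype with hS
  have hScl : IsClosed (S : Set ↥W₂) := by
    have : (S : Set ↥W₂) = (Subtype.val : ↥W₂ → X) ⁻¹' (W₁ : Set X) := rfl
    rw [this]
    exact hcl.preimage continuous_subtype_val
  have hPS : P ↥S := hP.2.2 _ S hScl h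
  refine hP.1 _ _ ?_ hPS
  exact { Submodule.comapSubtypeEquivOfLe hle with
    continuous_toFun :=
      Continuous.subtype_mk (continuous_subtype_val.comp continuous_subtype_val) _
    continuous_invFun :=
      Continuous.subtype_mk (Continuous.subtype_mk continuous_subtype_val _) _ }

variable {M : Type u} [MetricSpace M] {F : Type v} [NormedAddCommGroup F]
  [NormedSpace ℝ F] {o : M} {δ : M → F}

lemma freeSpan_mono {S T : Set M} (h : S ⊆ T) : freeSpan δ S ≤ freeSpan δ T :=
  Submodule.topologicalClosure_mono (Submodule.span_mono (Set.image_mono h))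

lemma isClosed_freeSpan (S : Set M) : IsClosed (freeSpan δ S : Set F) :=
  Submodule.isClosed_topologicalClosure _

lemma lip_mul {α : Type*} [PseudoMetricSpace α] {f g : α → ℝ} {Lf Lg : NNReal}
    (hf : LipschitzWith Lf f) (hg : LipschitzWith Lg g)
    (hfb : ∀ x, |f x| ≤ 1) (hgb : ∀ x, |g x| ≤ 1) :
    LipschitzWith (Lf + Lg) (fun x => f x * g x) := by
  apply LipschitzWith.of_dist_le_mul
  intro a b
  have h1 := hf.dist_le_mul a b
  have h2 := hg.dist_le_mul a b
  rw [Real.dist_eq] at h1 h2 ⊢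
  have key : f a * g a - f b * g b = f a * (g a - g b) + g b * (f a - f b) := by ring
  calc |f a * g a - f b * g b| = |f a * (g a - g b) + g b * (f a - f b)| := by rw [key]
    _ ≤ |f a * (g a - g b)| + |g b * (f a - f b)| := abs_add_le _ _
    _ = |f a| * |g a - g b| + |g b| * |f a - f b| := by rw [abs_mul, abs_mul]
    _ ≤ 1 * (Lg * dist a b) + 1 * (Lf * dist a b) := by
        gcongr <;> [exact hfb a; exact hgb b]
    _ = (↑(Lf + Lg) : ℝ) * dist a b := by push_cast; ring

/-- The weighting operator: multiplication of "measures" by a bounded, Lipschitz,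
boundedly supported weight function. -/
lemma exists_weight_op [CompleteSpace F] (hδ : IsLipschitzFree o δ) (h : M → ℝ)
    (L R : NNReal) (hL : LipschitzWith L h) (hb : ∀ x, |h x| ≤ 1)
    (hs : ∀ x, h x ≠ 0 → dist x o ≤ R) :
    ∃ T : F →L[ℝ] F, ∀ x, T (δ x) = h x • δ x := by
  classical
  set C : NNReal := L * R + 1 with hC
  set Φ : (M →₀ ℝ) →ₗ[ℝ] F := Finsupp.linearCombination ℝ δ with hΦ
  set t₀ : (M →₀ ℝ) →ₗ[ℝ] F := Finsupp.linearCombination ℝ (fun x => h x • δ x) with ht₀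
  have key : ∀ w : M →₀ ℝ, ‖t₀ w‖ ≤ C * ‖Φ w‖ := by
    intro w
    by_cases h0 : t₀ w = 0
    · rw [h0, norm_zero]
      positivity
    obtain ⟨φ, hφ1, hφx⟩ := exists_dual_vector ℝ (t₀ w) (norm_ne_zero_iff.mpr h0)
    set g : M → ℝ := fun x => φ (δ x) with hg
    have hgo : g o = 0 := by simp [hg, hδ.map_base]
    have hglip : ∀ x y, |g x - g y| ≤ dist x y := by
      intro x y
      have : g x - g y = φ (δ x - δ y) := by simp [hg]
      rw [this]
      calc |φ (δ x - δ y)| ≤ ‖φ‖ * ‖δ x - δ y‖ := by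
            simpa [Real.norm_eq_abs] using φ.le_opNorm (δ x - δ y)
        _ = dist x y := by rw [hφ1, one_mul, ← dist_eq_norm, hδ.isometry.dist_eq]
    have hgbound : ∀ x, h x ≠ 0 → |g x| ≤ R := by
      intro x hx
      have : |g x| = |g x - g o| := by rw [hgo, sub_zero]
      rw [this]
      exact (hglip x o).trans (hs x hx)
    have hlip : LipschitzWith C (fun x => h x * g x) := by
      apply LipschitzWith.of_dist_le_mul
      intro a b
      have hab : |h a - h b| ≤ L * dist a b := by
        have := hL.dist_le_mul a b
        rwa [Real.dist_eq] at this
      rw [Real.dist_eq]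
      rcases eq_or_ne (h a) 0 with ha | ha
      · rcases eq_or_ne (h b) 0 with hb' | hb'
        · rw [ha, hb', zero_mul, zero_mul, sub_zero, abs_zero]
          positivity
        · have h1 : |h b| ≤ L * dist a b := by
            have : |h b| = |h a - h b| := by rw [ha, zero_sub, abs_neg]
            rw [this]; exact hab
          calc |h a * g a - h b * g b| = |h b| * |g b| := by
                rw [ha, zero_mul, zero_sub, abs_neg, abs_mul]
            _ ≤ (L * dist a b) * R := by
                exact mul_le_mul h1 (hgbound b hb') (abs_nonneg _) (by positivity)
            _ ≤ (↑C : ℝ) * dist a b := by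
                rw [hC]; push_cast
                nlinarith [dist_nonneg (x := a) (y := b)]
      · have hga : |g a| ≤ R := hgbound a ha
        have keyeq : h a * g a - h b * g b = g a * (h a - h b) + h b * (g a - g b) := by
          ring
        calc |h a * g a - h b * g b|
            = |g a * (h a - h b) + h b * (g a - g b)| := by rw [keyeq]
          _ ≤ |g a| * |h a - h b| + |h b| * |g a - g b| := by
              refine (abs_add_le _ _).trans ?_
              rw [abs_mul, abs_mul]
          _ ≤ (R : ℝ) * (L * dist a b) + 1 * dist a b := by
              gcongr
              · exact hb b
              · exact hglip a b
          _ = (↑C : ℝ) * dist a b := by rw [hC]; push_cast; ring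
    obtain ⟨ψ, hψn, hψx⟩ := hδ.lift C _ hlip (by rw [hgo, mul_zero])
    have hcalc : φ (t₀ w) = ψ (Φ w) := by
      rw [ht₀, hΦ, Finsupp.linearCombination_apply, Finsupp.linearCombination_apply,
        map_finsuppSum, map_finsuppSum]
      refine Finsupp.sum_congr fun x _ => ?_
      rw [map_smul, map_smul, map_smul, hψx]
      simp [hg, smul_eq_mul]
    have : (‖t₀ w‖ : ℝ) = φ (t₀ w) := by exact_mod_cast hφx.symm
    rw [this, hcalc]
    calc ψ (Φ w) ≤ |ψ (Φ w)| := le_abs_self _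
      _ ≤ ‖ψ‖ * ‖Φ w‖ := by simpa [Real.norm_eq_abs] using ψ.le_opNorm (Φ w)
      _ ≤ C * ‖Φ w‖ := mul_le_mul_of_nonneg_right hψn (norm_nonneg _)
  have hker : LinearMap.ker Φ ≤ LinearMap.ker t₀ := by
    intro w hw
    rw [LinearMap.mem_ker] at hw ⊢
    have := key w
    rw [hw, norm_zero, mul_zero] at this
    exact norm_le_zero_iff.mp this
  set tbar : ((M →₀ ℝ) ⧸ LinearMap.ker Φ) →ₗ[ℝ] F := (LinearMap.ker Φ).liftQ t₀ hker
    with htbar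
  set e : ((M →₀ ℝ) ⧸ LinearMap.ker Φ) ≃ₗ[ℝ] ↥(LinearMap.range Φ) := Φ.quotKerEquivRange
    with he
  set fLin : ↥(LinearMap.range Φ) →ₗ[ℝ] F := tbar ∘ₗ (e.symm : _ →ₗ[ℝ] _) with hfLin
  have hfLinval : ∀ w : M →₀ ℝ, fLin ⟨Φ w, LinearMap.mem_range_self _ w⟩ = t₀ w := by
    intro w
    have h1 : e (Submodule.Quotient.mk w) = ⟨Φ w, LinearMap.mem_range_self _ w⟩ :=
      Subtype.ext (Φ.quotKerEquivRange_apply_mk w)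
    have h2 : e.symm ⟨Φ w, LinearMap.mem_range_self _ w⟩ = Submodule.Quotient.mk w := by
      rw [← h1, LinearEquiv.symm_apply_apply]
    rw [hfLin]
    simp only [LinearMap.coe_comp, Function.comp_apply, LinearEquiv.coe_coe, h2, htbar,
      Submodule.liftQ_apply]
  have hbound : ∀ μ : ↥(LinearMap.range Φ), ‖fLin μ‖ ≤ C * ‖μ‖ := by
    rintro ⟨_, w, rfl⟩
    rw [hfLinval w]
    exact key w
  set f : ↥(LinearMap.range Φ) →L[ℝ] F := fLin.mkContinuous C hbound with hf
  have hdense : DenseRange ((LinearMap.range Φ).subtypeL : ↥(LinearMap.range Φ) →L[ℝ] F) := by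
    have h1 : Set.range ((LinearMap.range Φ).subtypeL : ↥(LinearMap.range Φ) →L[ℝ] F)
        = (LinearMap.range Φ : Set F) := Subtype.range_coe
    rw [DenseRange, h1, hΦ, Finsupp.range_linearCombination]
    exact hδ.dense_span
  have hui : IsUniformInducing ((LinearMap.range Φ).subtypeL : ↥(LinearMap.range Φ) →L[ℝ] F) :=
    isUniformEmbedding_subtype_val.isUniformInducing
  refine ⟨f.extend (LinearMap.range Φ).subtypeL, fun x => ?_⟩
  set w : M →₀ ℝ := Finsupp.single x 1 with hw
  have hΦw : Φ w = δ x := by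
    rw [hΦ, hw, Finsupp.linearCombination_single, one_smul]
  have ht₀w : t₀ w = h x • δ x := by
    rw [ht₀, hw, Finsupp.linearCombination_single, one_smul]
  have hδx : δ x = (LinearMap.range Φ).subtypeL ⟨Φ w, LinearMap.mem_range_self _ w⟩ := by
    simp [hΦw]
  rw [hδx, ContinuousLinearMap.extend_eq _ hdense hui, hf, LinearMap.mkContinuous_apply, hfLinval, ht₀w,
    ← hδx]

set_option maxHeartbeats 2000000 in
lemma split_freeSpan [CompleteSpace F]
    {P : ∀ (X : Type v) [NormedAddCommGroup X] [NormedSpace ℝ X], Prop}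
    (hP : StandardProperty P) (hδ : IsLipschitzFree o δ)
    {K V₁ V₂ : Set M} (hK : IsCompact K) (hV₁ : IsOpen V₁) (hV₂ : IsOpen V₂)
    (hcover : K ⊆ V₁ ∪ V₂)
    (h₁ : ∀ S : Set M, IsCompact S → S ⊆ V₁ → P ↥(freeSpan δ (S ∪ {o})))
    (h₂ : ∀ S : Set M, IsCompact S → S ⊆ V₂ → P ↥(freeSpan δ (S ∪ {o}))) :
    P ↥(freeSpan δ (K ∪ {o})) := by
  classical
  set K₁ : Set M := K \ V₂ with hK₁
  set K₂ : Set M := K \ V₁ with hK₂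
  by_cases hK₂e : K₂ = ∅
  · refine h₁ K hK fun x hx => ?_
    by_contra hxV
    exact absurd (show x ∈ K₂ from ⟨hx, hxV⟩) (by simp [hK₂e])
  by_cases hK₁e : K₁ = ∅
  · refine h₂ K hK fun x hx => ?_
    by_contra hxV
    exact absurd (show x ∈ K₁ from ⟨hx, hxV⟩) (by simp [hK₁e])
  have hK₁c : IsCompact K₁ := hK.diff hV₂
  have hK₂c : IsCompact K₂ := hK.diff hV₁
  have hK₂cl : IsClosed K₂ := hK₂c.isClosed
  have hK₂ne : K₂.Nonempty := Set.nonempty_iff_ne_empty.mpr hK₂e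
  have hK₁ne : K₁.Nonempty := Set.nonempty_iff_ne_empty.mpr hK₁e
  -- positive separation between `K₁` and `K₂`
  obtain ⟨x₀, hx₀, hmin⟩ := hK₁c.exists_isMinOn hK₁ne
    ((continuous_infDist_pt K₂).continuousOn)
  set d : ℝ := infDist x₀ K₂ with hd
  have hdpos : 0 < d := by
    rw [hd]
    refine (hK₂cl.notMem_iff_infDist_pos hK₂ne).mp fun hx₀K₂ => ?_
    rcases hcover hx₀.1 with hh | hh
    · exact hx₀K₂.2 hh
    · exact hx₀.2 hh
  have hdmin : ∀ x ∈ K₁, d ≤ infDist x K₂ := fun x hx => hmin hx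
  have hKne : K.Nonempty := hK₁ne.mono Set.diff_subset
  obtain ⟨r, hr⟩ := hK.isBounded.subset_closedBall o
  have hr0 : 0 ≤ r := by
    obtain ⟨k, hk⟩ := hKne
    have := hr hk
    simp only [Metric.mem_closedBall] at this
    exact dist_nonneg.trans this
  set R : NNReal := Real.toNNReal (r + 1) with hR
  have hRr : (R : ℝ) = r + 1 := Real.coe_toNNReal _ (by linarith)
  set c : ℝ := 3 / d with hc
  have hcpos : 0 < c := by positivity
  set θ : M → ℝ := fun x => min (max (c * infDist x K₂ - 1) 0) 1 with hθ
  set ρ : M → ℝ := fun x => max (1 - infDist x K) 0 with hρ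
  have hθ0 : ∀ x, 0 ≤ θ x := fun x => le_min (le_max_right _ _) zero_le_one
  have hθ1 : ∀ x, θ x ≤ 1 := fun x => min_le_right _ _
  have hρ0 : ∀ x, 0 ≤ ρ x := fun x => le_max_right _ _
  have hρ1 : ∀ x, ρ x ≤ 1 := fun x =>
    max_le (by linarith [infDist_nonneg (x := x) (s := K)]) zero_le_one
  have hinf : ∀ a b : M, |infDist a K₂ - infDist b K₂| ≤ dist a b := by
    intro a b
    have := (lipschitz_infDist_pt K₂).dist_le_mul a b
    rwa [Real.dist_eq, NNReal.coe_one, one_mul] at this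
  have hθlip : LipschitzWith (Real.toNNReal c) θ := by
    apply LipschitzWith.of_dist_le_mul
    intro a b
    rw [Real.dist_eq]
    calc |θ a - θ b|
        ≤ max (|max (c * infDist a K₂ - 1) 0 - max (c * infDist b K₂ - 1) 0|) |(1:ℝ) - 1| :=
          abs_min_sub_min_le_max _ _ _ _
      _ = |max (c * infDist a K₂ - 1) 0 - max (c * infDist b K₂ - 1) 0| := by
          rw [sub_self, abs_zero]
          exact max_eq_left (abs_nonneg _)
      _ ≤ |(c * infDist a K₂ - 1) - (c * infDist b K₂ - 1)| := abs_max_sub_max_le_abs _ _ _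
      _ = c * |infDist a K₂ - infDist b K₂| := by
          rw [show (c * infDist a K₂ - 1) - (c * infDist b K₂ - 1)
              = c * (infDist a K₂ - infDist b K₂) by ring, abs_mul, abs_of_pos hcpos]
      _ ≤ c * dist a b := by
          exact mul_le_mul_of_nonneg_left (hinf a b) hcpos.le
      _ = (Real.toNNReal c : ℝ) * dist a b := by
          rw [Real.coe_toNNReal _ hcpos.le]
  have hρlip : LipschitzWith 1 ρ := by
    apply LipschitzWith.of_dist_le_mul
    intro a b
    rw [Real.dist_eq, NNReal.coe_one, one_mul]
    calc |ρ a - ρ b| ≤ |(1 - infDist a K) - (1 - infDist b K)| :=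
          abs_max_sub_max_le_abs _ _ _
      _ = |infDist b K - infDist a K| := by
          rw [show (1 - infDist a K - (1 - infDist b K)) = infDist b K - infDist a K by ring]
      _ ≤ dist b a := by
          have := (lipschitz_infDist_pt K).dist_le_mul b a
          rwa [Real.dist_eq, NNReal.coe_one, one_mul] at this
      _ = dist a b := dist_comm _ _
  have h1θlip : LipschitzWith (Real.toNNReal c) (fun x => 1 - θ x) := by
    apply LipschitzWith.of_dist_le_mul
    intro a b
    have := hθlip.dist_le_mul a b
    rw [Real.dist_eq] at this ⊢
    calc |1 - θ a - (1 - θ b)| = |θ a - θ b| := by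
          rw [show (1 - θ a - (1 - θ b)) = -(θ a - θ b) by ring, abs_neg]
      _ ≤ _ := this
  -- support of ρ is bounded
  have hρsupp : ∀ x, ρ x ≠ 0 → dist x o ≤ (R : ℝ) := by
    intro x hx
    have h1 : infDist x K < 1 := by
      by_contra hcon
      push_neg at hcon
      have : (1 : ℝ) - infDist x K ≤ 0 := by linarith
      exact hx (max_eq_right this)
    obtain ⟨k, hkK, hdk⟩ := (infDist_lt_iff hKne).mp h1
    have hko : dist k o ≤ r := by
      have := hr hkK
      simpa [Metric.mem_closedBall] using this
    calc dist x o ≤ dist x k + dist k o := dist_triangle _ _ _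
      _ ≤ 1 + r := by linarith
      _ = (R : ℝ) := by rw [hRr]; ring
  -- the two weighting operators
  obtain ⟨T₁, hT₁⟩ := exists_weight_op hδ (fun x => θ x * ρ x) (Real.toNNReal c + 1) R
    (lip_mul hθlip hρlip (fun x => abs_le.mpr ⟨by linarith [hθ0 x], hθ1 x⟩)
      (fun x => abs_le.mpr ⟨by linarith [hρ0 x], hρ1 x⟩))
    (fun x => by
      rw [abs_mul]
      calc |θ x| * |ρ x| ≤ 1 * 1 := by
            refine mul_le_mul ?_ ?_ (abs_nonneg _) zero_le_one
            · exact abs_le.mpr ⟨by linarith [hθ0 x], hθ1 x⟩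
            · exact abs_le.mpr ⟨by linarith [hρ0 x], hρ1 x⟩
        _ = 1 := one_mul 1)
    (fun x hx => hρsupp x fun h0 => hx (by show θ x * ρ x = 0; rw [h0, mul_zero]))
  obtain ⟨T₂, hT₂⟩ := exists_weight_op hδ (fun x => (1 - θ x) * ρ x) (Real.toNNReal c + 1) R
    (lip_mul h1θlip hρlip (fun x => abs_le.mpr ⟨by linarith [hθ1 x], by linarith [hθ0 x]⟩)
      (fun x => abs_le.mpr ⟨by linarith [hρ0 x], hρ1 x⟩))
    (fun x => by
      rw [abs_mul]
      calc |1 - θ x| * |ρ x| ≤ 1 * 1 := by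
            refine mul_le_mul ?_ ?_ (abs_nonneg _) zero_le_one
            · exact abs_le.mpr ⟨by linarith [hθ1 x], by linarith [hθ0 x]⟩
            · exact abs_le.mpr ⟨by linarith [hρ0 x], hρ1 x⟩
        _ = 1 := one_mul 1)
    (fun x hx => hρsupp x fun h0 => hx (by show (1 - θ x) * ρ x = 0; rw [h0, mul_zero]))
  -- the compact pieces
  set S₁ : Set M := K ∩ {x | d / 3 ≤ infDist x K₂} with hS₁
  set S₂ : Set M := K ∩ {x | infDist x K₂ ≤ 2 * d / 3} with hS₂
  have hS₁c : IsCompact S₁ :=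
    hK.inter_right (isClosed_le continuous_const (continuous_infDist_pt K₂))
  have hS₂c : IsCompact S₂ :=
    hK.inter_right (isClosed_le (continuous_infDist_pt K₂) continuous_const)
  have hS₁V : S₁ ⊆ V₁ := by
    rintro x ⟨hxK, hxd⟩
    by_contra hxV
    have hxK₂ : x ∈ K₂ := ⟨hxK, hxV⟩
    have h0 : infDist x K₂ = 0 := infDist_zero_of_mem hxK₂
    have hxd' : d / 3 ≤ infDist x K₂ := hxd
    rw [h0] at hxd'
    linarith
  have hS₂V : S₂ ⊆ V₂ := by
    rintro x ⟨hxK, hxd⟩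
    by_contra hxV
    have hxK₁ : x ∈ K₁ := ⟨hxK, hxV⟩
    have h5 := hdmin x hxK₁
    have hxd' : infDist x K₂ ≤ 2 * d / 3 := hxd
    linarith
  -- support facts
  have fact₁ : ∀ x ∈ K, θ x * ρ x ≠ 0 → x ∈ S₁ := by
    intro x hxK hne
    have hθne : θ x ≠ 0 := fun h0 => hne (by rw [h0, zero_mul])
    refine ⟨hxK, ?_⟩
    simp only [Set.mem_setOf_eq]
    by_contra hcon
    push_neg at hcon
    have h1 : c * infDist x K₂ - 1 < 0 := by
      have : c * infDist x K₂ < c * (d / 3) := by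
        exact mul_lt_mul_of_pos_left hcon hcpos
      have h3 : c * (d / 3) = 1 := by
        rw [hc]; field_simp
      linarith
    exact hθne (by rw [hθ]; simp only; rw [max_eq_right h1.le, min_eq_left zero_le_one])
  have fact₂ : ∀ x ∈ K, (1 - θ x) * ρ x ≠ 0 → x ∈ S₂ := by
    intro x hxK hne
    have hθne : θ x ≠ 1 := fun h0 => hne (by rw [h0, sub_self, zero_mul])
    refine ⟨hxK, ?_⟩
    simp only [Set.mem_setOf_eq]
    by_contra hcon
    push_neg at hcon
    have h1 : (1 : ℝ) ≤ c * infDist x K₂ - 1 := by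
      have h2 : c * (2 * d / 3) ≤ c * infDist x K₂ :=
        mul_le_mul_of_nonneg_left hcon.le hcpos.le
      have h3 : c * (2 * d / 3) = 2 := by
        rw [hc]; field_simp
      linarith
    exact hθne (by
      rw [hθ]; simp only
      rw [max_eq_left (by linarith), min_eq_right h1])
  have hρK : ∀ x ∈ K, ρ x = 1 := by
    intro x hx
    rw [hρ]; simp only
    rw [infDist_zero_of_mem hx, sub_zero, max_eq_left zero_le_one]
  -- the three closed subspaces
  set X : Submodule ℝ F := freeSpan δ (K ∪ {o}) with hX
  set Y₁ : Submodule ℝ F := freeSpan δ (S₁ ∪ {o}) with hY₁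
  set Y₂ : Submodule ℝ F := freeSpan δ (S₂ ∪ {o}) with hY₂
  -- T₁ maps X into Y₁, T₂ maps X into Y₂
  have hmem₁ : ∀ z ∈ δ '' (K ∪ {o}), T₁ z ∈ Y₁ := by
    rintro _ ⟨x, hx, rfl⟩
    rw [hT₁ x]
    rcases hx with hx | hx
    · by_cases hz : θ x * ρ x = 0
      · rw [hz, zero_smul]; exact Submodule.zero_mem _
      · exact Submodule.smul_mem _ _ (mem_freeSpan δ (Or.inl (fact₁ x hx hz)))
    · simp only [Set.mem_singleton_iff] at hx
      subst hx
      rw [hδ.map_base, smul_zero]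
      exact Submodule.zero_mem _
  have hmem₂ : ∀ z ∈ δ '' (K ∪ {o}), T₂ z ∈ Y₂ := by
    rintro _ ⟨x, hx, rfl⟩
    rw [hT₂ x]
    rcases hx with hx | hx
    · by_cases hz : (1 - θ x) * ρ x = 0
      · rw [hz, zero_smul]; exact Submodule.zero_mem _
      · exact Submodule.smul_mem _ _ (mem_freeSpan δ (Or.inl (fact₂ x hx hz)))
    · simp only [Set.mem_singleton_iff] at hx
      subst hx
      rw [hδ.map_base, smul_zero]
      exact Submodule.zero_mem _
  have hXY₁ : X ≤ Y₁.comap (T₁ : F →ₗ[ℝ] F) := by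
    refine Submodule.topologicalClosure_minimal _ ?_ ?_
    · rw [Submodule.span_le]
      exact fun z hz => hmem₁ z hz
    · exact (isClosed_freeSpan (S₁ ∪ {o})).preimage T₁.continuous
  have hXY₂ : X ≤ Y₂.comap (T₂ : F →ₗ[ℝ] F) := by
    refine Submodule.topologicalClosure_minimal _ ?_ ?_
    · rw [Submodule.span_le]
      exact fun z hz => hmem₂ z hz
    · exact (isClosed_freeSpan (S₂ ∪ {o})).preimage T₂.continuous
  -- T₁ + T₂ = id on X
  have hid : ∀ μ : ↥X, T₁ (μ : F) + T₂ (μ : F) = (μ : F) := by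
    set G : F →L[ℝ] F := T₁ + T₂ - ContinuousLinearMap.id ℝ F with hG
    have hker : X ≤ LinearMap.ker (G : F →ₗ[ℝ] F) := by
      refine Submodule.topologicalClosure_minimal _ ?_ ?_
      · rw [Submodule.span_le]
        rintro _ ⟨x, hx, rfl⟩
        rw [SetLike.mem_coe, LinearMap.mem_ker, ContinuousLinearMap.coe_coe]
        rcases hx with hx | hx
        · have : G (δ x) = (θ x * ρ x) • δ x + ((1 - θ x) * ρ x) • δ x - δ x := by
            simp [hG, hT₁ x, hT₂ x]
          rw [this, ← add_smul]
          have heq : θ x * ρ x + (1 - θ x) * ρ x = 1 := by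
            rw [hρK x hx]; ring
          rw [heq, one_smul, sub_self]
        · simp only [Set.mem_singleton_iff] at hx
          subst hx
          simp [hG, hδ.map_base]
      · exact ContinuousLinearMap.isClosed_ker G
    intro μ
    have h1 : G (μ : F) = 0 := hker μ.2
    have h2 : G (μ : F) = T₁ (μ : F) + T₂ (μ : F) - (μ : F) := by simp [hG]
    rw [h2] at h1
    exact sub_eq_zero.mp h1
  -- restricted operators and the embedding J
  haveI : CompleteSpace ↥X := (isClosed_freeSpan (K ∪ {o})).completeSpace_coe
  haveI : CompleteSpace ↥Y₁ := (isClosed_freeSpan (S₁ ∪ {o})).completeSpace_coe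
  haveI : CompleteSpace ↥Y₂ := (isClosed_freeSpan (S₂ ∪ {o})).completeSpace_coe
  set T₁X : ↥X →L[ℝ] ↥Y₁ :=
    (T₁.comp X.subtypeL).codRestrict Y₁ (fun μ => hXY₁ μ.2) with hT₁X
  set T₂X : ↥X →L[ℝ] ↥Y₂ :=
    (T₂.comp X.subtypeL).codRestrict Y₂ (fun μ => hXY₂ μ.2) with hT₂X
  set J : ↥X →L[ℝ] ↥Y₁ × ↥Y₂ := T₁X.prod T₂X with hJdef
  have hJbound : ∀ μ : ↥X, ‖μ‖ ≤ 2 * ‖J μ‖ := by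
    intro μ
    have e1 : ‖μ‖ = ‖T₁ (μ : F) + T₂ (μ : F)‖ := by rw [hid μ]; rfl
    have e2 : ‖T₁ (μ : F)‖ ≤ ‖J μ‖ := by
      have h : ‖T₁ (μ : F)‖ = ‖(J μ).1‖ := rfl
      rw [h]; exact norm_fst_le _
    have e3 : ‖T₂ (μ : F)‖ ≤ ‖J μ‖ := by
      have h : ‖T₂ (μ : F)‖ = ‖(J μ).2‖ := rfl
      rw [h]; exact norm_snd_le _
    calc ‖μ‖ = ‖T₁ (μ : F) + T₂ (μ : F)‖ := e1
      _ ≤ ‖T₁ (μ : F)‖ + ‖T₂ (μ : F)‖ := norm_add_le _ _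
      _ ≤ 2 * ‖J μ‖ := by linarith
  have hJanti : AntilipschitzWith 2 J := by
    refine AddMonoidHomClass.antilipschitz_of_bound J fun μ => ?_
    have := hJbound μ
    exact_mod_cast this
  set Z : Submodule ℝ (↥Y₁ × ↥Y₂) := LinearMap.range (J : ↥X →ₗ[ℝ] ↥Y₁ × ↥Y₂) with hZ
  have hZclosed : IsClosed (Z : Set (↥Y₁ × ↥Y₂)) := by
    have h : (Z : Set (↥Y₁ × ↥Y₂)) = Set.range J := by
      rw [hZ]; exact LinearMap.coe_range _
    rw [h]
    exact hJanti.isClosed_range J.uniformContinuous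
  haveI : CompleteSpace ↥Z := hZclosed.completeSpace_coe
  set J' : ↥X →L[ℝ] ↥Z := J.codRestrict Z (fun μ => LinearMap.mem_range_self _ μ) with hJ'
  have hinj : LinearMap.ker (J' : ↥X →ₗ[ℝ] ↥Z) = ⊥ := by
    rw [LinearMap.ker_eq_bot]
    intro a b hab
    exact hJanti.injective (congrArg Subtype.val hab)
  have hsurj : LinearMap.range (J' : ↥X →ₗ[ℝ] ↥Z) = ⊤ := by
    rw [LinearMap.range_eq_top]
    rintro ⟨z, μ, rfl⟩
    exact ⟨μ, rfl⟩
  set eqv : ↥X ≃L[ℝ] ↥Z := ContinuousLinearEquiv.ofBijective J' hinj hsurj with heqv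
  have hPY₁ : P ↥Y₁ := h₁ S₁ hS₁c hS₁V
  have hPY₂ : P ↥Y₂ := h₂ S₂ hS₂c hS₂V
  have hPprod : P (↥Y₁ × ↥Y₂) := hP.2.1 _ _ hPY₁ hPY₂
  have hPZ : P ↥Z := hP.2.2 _ Z hZclosed hPprod
  exact hP.1 _ _ eqv.symm hPZ

lemma free_induction [CompleteSpace F]
    {P : ∀ (X : Type v) [NormedAddCommGroup X] [NormedSpace ℝ X], Prop}
    (hP : StandardProperty P) (hδ : IsLipschitzFree o δ)
    {ι : Type*} (s : Finset ι) (U : ι → Set M) (hUo : ∀ i, IsOpen (U i)) :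
    (∀ i ∈ s, P ↥(freeSpan δ (closure (U i) ∪ {o}))) →
    P ↥(freeSpan δ ({o} : Set M)) →
    ∀ K : Set M, IsCompact K → (K ⊆ ⋃ i ∈ s, U i) → P ↥(freeSpan δ (K ∪ {o})) := by
  classical
  induction s using Finset.induction_on with
  | empty =>
    intro _ hbot K hK hcov
    have hKe : K = ∅ := by simpa using hcov
    have h2 : K ∪ {o} = ({o} : Set M) := by rw [hKe, Set.empty_union]
    rw [h2]
    exact hbot
  | @insert a s ha IH =>
    intro hU hbot K hK hcov
    rw [Finset.set_biUnion_insert] at hcov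
    refine split_freeSpan hP hδ hK (hUo a)
      (isOpen_iUnion fun i => isOpen_iUnion fun _ => hUo i) hcov ?_ ?_
    · intro S hS hSV
      refine standard_mono hP (freeSpan_mono ?_) (isClosed_freeSpan _)
        (hU a (Finset.mem_insert_self a s))
      exact Set.union_subset_union_left _ (hSV.trans subset_closure)
    · intro S hS hSV
      exact IH (fun i hi => hU i (Finset.mem_insert_of_mem hi)) hbot S hS hSV


end Aux

/-- Let `P` be a standard Banach space property.  If `P` is compactly determined for a
Lipschitz-free space, then it is locally determined for it; moreover, if `M` is locally
compact, then `P` is compactly determined for `F(M)` if and only if it is locally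
determined for `F(M)`. -/
theorem compactlyDetermined_iff_locallyDetermined
    (P : ∀ (X : Type v) [NormedAddCommGroup X] [NormedSpace ℝ X], Prop)
    (hP : StandardProperty P)
    {M : Type*} [MetricSpace M] [CompleteSpace M] (o : M)
    {F : Type v} [NormedAddCommGroup F] [NormedSpace ℝ F] [CompleteSpace F]
    (δ : M → F) (hδ : IsLipschitzFree o δ) :
    (CompactlyDetermined P o δ → LocallyDetermined P o δ) ∧
      (LocallyCompactSpace M →
        (CompactlyDetermined P o δ ↔ LocallyDetermined P o δ)) := by
  have main : CompactlyDetermined P o δ → LocallyDetermined P o δ := by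
    intro hCD hH
    apply hCD
    intro K hK
    choose U hUmem hPU using hH
    set V : M → Set M := fun x => interior (U x) with hV
    have hVo : ∀ x : M, IsOpen (V x) := fun _ => isOpen_interior
    have hPV : ∀ x : M, P ↥(freeSpan δ (closure (V x) ∪ {o})) := fun x =>
      standard_mono hP (freeSpan_mono (Set.union_subset_union_left _
        (closure_mono interior_subset))) (isClosed_freeSpan _) (hPU x)
    have hbot : P ↥(freeSpan δ ({o} : Set M)) :=
      standard_mono hP (freeSpan_mono Set.subset_union_right) (isClosed_freeSpan _) (hPU o)
    obtain ⟨t, _, htcov⟩ := hK.elim_nhds_subcover V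
      (fun x _ => (hVo x).mem_nhds (mem_interior_iff_mem_nhds.mpr (hUmem x)))
    exact free_induction hP hδ t V hVo (fun i _ => hPV i) hbot K hK htcov
  refine ⟨main, fun hLC => ⟨main, ?_⟩⟩
  intro hLD hHC
  apply hLD
  intro x
  haveI := hLC
  obtain ⟨Kx, hKx, hmem⟩ := exists_compact_mem_nhds x
  refine ⟨interior Kx, interior_mem_nhds.mpr hmem, ?_⟩
  have hcl : IsCompact (closure (interior Kx)) :=
    hKx.of_isClosed_subset isClosed_closure (closure_minimal interior_subset hKx.isClosed)
  exact hHC _ hcl
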